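/- Let A¹,…,A^d be D×D complex matrices with Σᵢ Aⁱ(Aⁱ)† = 𝟙, let Λ be a positive definite D×D matrix fixed by the right map: Σᵢ AⁱΛ(Aⁱ)† = Λ. Let B¹,…,B^d be D'×D' matrices whose induced left map has spectral radius ≤ 1 in the sense that Σⱼ Tr(Bʲ Y (Bʲ)†) ≤ Tr(Y) for all positive semidefinite Y. If X is a D'×D matrix with Σᵢ (Bⁱ)† X Aⁱ = λX for some λ ∈ ℂ and X ≠ 0, then |λ| ≤ 1. -/

import Mathlib

open Matrix
open scoped ComplexOrder

private lemma frob_trace {D' D : ℕ} (M N : Matrix (Fin D') (Fin D) ℂ) :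
    ∑ a, ∑ b, (starRingEnd ℂ) (M a b) * N a b = (N * Mᴴ).trace := by
  simp only [Matrix.trace, Matrix.diag, Matrix.mul_apply, Matrix.conjTranspose_apply]
  refine Finset.sum_congr rfl fun a _ => Finset.sum_congr rfl fun b _ => ?_
  simp [mul_comm, Complex.star_def]

/-- Mixed transfer matrix eigenvalue bound: if `Σᵢ AⁱΛ(Aⁱ)† = Λ` with `Λ`
positive definite and `Σᵢ Aⁱ(Aⁱ)† = 𝟙`, the induced left map of the `Bʲ`
does not increase traces of positive semidefinite matrices, and
`Σᵢ (Bⁱ)† X Aⁱ = λ X` with `X ≠ 0`, then `|λ| ≤ 1`. -/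
theorem stmt10 (d D D' : ℕ)
    (A : Fin d → Matrix (Fin D) (Fin D) ℂ)
    (B : Fin d → Matrix (Fin D') (Fin D') ℂ)
    (hrc : ∑ i, A i * (A i)ᴴ = 1)
    (Λ : Matrix (Fin D) (Fin D) ℂ) (hΛ : Λ.PosDef)
    (hfix : ∑ i, A i * Λ * (A i)ᴴ = Λ)
    (hB : ∀ Y : Matrix (Fin D') (Fin D') ℂ, Y.PosSemidef →
      (∑ j, B j * Y * (B j)ᴴ).trace.re ≤ Y.trace.re)
    (X : Matrix (Fin D') (Fin D) ℂ) (hX0 : X ≠ 0)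
    (lam : ℂ) (heig : ∑ i, (B i)ᴴ * X * A i = lam • X) :
    ‖lam‖ ≤ 1 := by
  classical
  open scoped MatrixOrder in
  set L := CFC.sqrt Λ with hLdef
  open scoped MatrixOrder in
  have hLL : L * L = Λ := CFC.sqrt_mul_sqrt_self Λ hΛ.posSemidef.nonneg
  open scoped MatrixOrder in
  have hLH : Lᴴ = L := (CFC.sqrt_nonneg Λ).posSemidef.isHermitian
  have hYpsd : (X * Λ * Xᴴ).PosSemidef := hΛ.posSemidef.mul_mul_conjTranspose_same X
  have hfact : X * Λ * Xᴴ = (X * L) * (X * L)ᴴ := by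
    rw [conjTranspose_mul, hLH, ← hLL]
    simp only [Matrix.mul_assoc]
  have htrMM : ∀ (n m : ℕ) (M : Matrix (Fin n) (Fin m) ℂ),
      (M * Mᴴ).trace = ((∑ a, ∑ b, Complex.normSq (M a b) : ℝ) : ℂ) := by
    intro n m M
    push_cast
    simp [Matrix.trace, Matrix.diag, Matrix.mul_apply, Matrix.conjTranspose_apply,
      Complex.mul_conj]
  set s : ℝ := ∑ a, ∑ b, Complex.normSq ((X * L) a b) with hsdef
  have hYtr : (X * Λ * Xᴴ).trace = (s : ℂ) := by rw [hfact, htrMM]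
  have hXL : X * L ≠ 0 := by
    intro h
    apply hX0
    have hXΛ : X * Λ = 0 := by
      rw [← hLL, ← Matrix.mul_assoc, h, Matrix.zero_mul]
    have hX : X = X * Λ * Λ⁻¹ := by
      rw [Matrix.mul_assoc, Matrix.mul_nonsing_inv _ hΛ.det_pos.ne'.isUnit, Matrix.mul_one]
    rw [hX, hXΛ, Matrix.zero_mul]
  have hs_nonneg : ∀ a ∈ (Finset.univ : Finset (Fin D')),
      0 ≤ ∑ b, Complex.normSq ((X * L) a b) :=
    fun a _ => Finset.sum_nonneg fun b _ => Complex.normSq_nonneg _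
  have hs_pos : 0 < s := by
    rcases lt_or_eq_of_le (Finset.sum_nonneg hs_nonneg) with h | h
    · exact h
    · exfalso; apply hXL
      ext a b
      have h1 := (Finset.sum_eq_zero_iff_of_nonneg hs_nonneg).mp h.symm a (Finset.mem_univ a)
      have h2 := (Finset.sum_eq_zero_iff_of_nonneg (fun b _ =>
        Complex.normSq_nonneg ((X * L) a b))).mp h1 b (Finset.mem_univ b)
      simpa using Complex.normSq_eq_zero.mp h2
  -- the two vectors
  set f : EuclideanSpace ℂ (Fin d × Fin D' × Fin D) :=
    WithLp.toLp 2 (fun p => (B p.1 * X * L) p.2.1 p.2.2) with hfdef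
  set g : EuclideanSpace ℂ (Fin d × Fin D' × Fin D) :=
    WithLp.toLp 2 (fun p => (X * A p.1 * L) p.2.1 p.2.2) with hgdef
  -- generic inner product computation
  have hinner : ∀ (M N : Fin d → Matrix (Fin D') (Fin D) ℂ),
      (@inner ℂ (EuclideanSpace ℂ (Fin d × Fin D' × Fin D)) _
        (WithLp.toLp 2 (fun p => (M p.1) p.2.1 p.2.2)) (WithLp.toLp 2 (fun p => (N p.1) p.2.1 p.2.2)))
        = ∑ i, (N i * (M i)ᴴ).trace := by
    intro M N
    rw [PiLp.inner_apply, Fintype.sum_prod_type]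
    refine Finset.sum_congr rfl fun i _ => ?_
    rw [← frob_trace (M i) (N i)]
    rw [Fintype.sum_prod_type]
    simp [RCLike.inner_apply, mul_comm]
  -- ⟪f, g⟫ = lam * s
  have hfg : (@inner ℂ _ _ f g : ℂ) = lam * (s : ℂ) := by
    rw [hfdef, hgdef]
    rw [hinner (fun i => B i * X * L) (fun i => X * A i * L)]
    have key : ∀ i : Fin d, ((X * A i * L) * (B i * X * L)ᴴ).trace
        = (((B i)ᴴ * X * A i) * (Λ * Xᴴ)).trace := by
      intro i
      have e1 : (X * A i * L) * (B i * X * L)ᴴ = (X * A i * Λ * Xᴴ) * (B i)ᴴ := by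
        rw [conjTranspose_mul, conjTranspose_mul, hLH, ← hLL]
        simp only [Matrix.mul_assoc]
      rw [e1, Matrix.trace_mul_comm]
      congr 1
      simp only [Matrix.mul_assoc]
    rw [Finset.sum_congr rfl fun i _ => key i, ← Matrix.trace_sum, ← Matrix.sum_mul, heig,
      Matrix.smul_mul, Matrix.trace_smul, ← Matrix.mul_assoc X Λ Xᴴ, hYtr]
    simp
  -- ⟪g, g⟫ = s
  have hgg : (@inner ℂ _ _ g g : ℂ) = (s : ℂ) := by
    rw [hgdef]
    rw [hinner (fun i => X * A i * L) (fun i => X * A i * L)]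
    have key : ∀ i : Fin d, ((X * A i * L) * (X * A i * L)ᴴ).trace
        = ((X * (A i * Λ * (A i)ᴴ)) * Xᴴ).trace := by
      intro i
      congr 1
      rw [conjTranspose_mul, conjTranspose_mul, hLH, ← hLL]
      simp only [Matrix.mul_assoc]
    rw [Finset.sum_congr rfl fun i _ => key i, ← Matrix.trace_sum]
    rw [← Matrix.sum_mul, ← Matrix.mul_sum, hfix, hYtr]
  -- ⟪f, f⟫ = trace of the B-channel applied to Y
  have hff : (@inner ℂ _ _ f f : ℂ) = (∑ j, B j * (X * Λ * Xᴴ) * (B j)ᴴ).trace := by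
    rw [hfdef]
    rw [hinner (fun i => B i * X * L) (fun i => B i * X * L)]
    rw [← Matrix.trace_sum]
    congr 1
    refine Finset.sum_congr rfl fun i _ => ?_
    rw [hfact, conjTranspose_mul, conjTranspose_mul, hLH, conjTranspose_mul, hLH]
    simp only [Matrix.mul_assoc]
  -- norms
  have hg_norm : ‖g‖ ^ 2 = s := by
    have h := inner_self_eq_norm_sq (𝕜 := ℂ) g
    rw [hgg] at h
    simpa using h.symm
  have hf_norm : ‖f‖ ^ 2 ≤ s := by
    have h := inner_self_eq_norm_sq (𝕜 := ℂ) f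
    rw [hff] at h
    rw [← h]
    have h1 := hB (X * Λ * Xᴴ) hYpsd
    rw [hYtr] at h1
    simpa using h1
  have hcs := norm_inner_le_norm (𝕜 := ℂ) f g
  rw [hfg] at hcs
  have habs : ‖lam * (s : ℂ)‖ = ‖lam‖ * s := by
    rw [norm_mul]
    simp [abs_of_pos hs_pos]
  rw [habs] at hcs
  nlinarith [sq_nonneg (‖f‖ - ‖g‖), norm_nonneg f, norm_nonneg g,
    norm_nonneg lam, hs_pos]
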